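/- arXiv:2106.14308 — 4 statements merged into one kernel-verified Lean document; each statement's English description precedes it below -/
import Mathlib

section
/- Let $\{a(k)\}$ satisfy $\frac{d_1}{k} \le a(k) \le d_3 k^{-d_2}$ for all $k \ge n_0$, where $d_1, d_3 > 0$ and $0 < d_2 \le 1$, and $a(k) \le 1$. Define $\chi(n,m+1) = \prod_{k=m+1}^{n}(1-a(k))$. Then $\max_{n_0 \le m \le n} a(m)\chi(n,m+1) \le d_3 2^{d_1} \beta_{n_0}(n)$, where $\beta_{n_0}(n) = \frac{1}{n_0^{d_2-d_1} n^{d_1}}$ if $d_1 \le d_2$ and $\beta_{n_0}(n) = \frac{1}{n^{d_2}}$ otherwise. -/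
open Finset Real

private lemma chi_bound (a : ℕ → ℝ) (d₁ : ℝ) (hd₁ : 0 < d₁)
    (ha0 : ∀ k, 0 ≤ a k) (ha1 : ∀ k, a k ≤ 1)
    (m : ℕ) (hm : ∀ k, m < k → d₁ / (k:ℝ) ≤ a k) :
    ∀ n, m ≤ n → ∏ k ∈ Finset.Icc (m+1) n, (1 - a k) ≤
      (((m:ℝ)+1)/((n:ℝ)+1)) ^ d₁ := by
  intro n hn
  induction n, hn using Nat.le_induction with
  | base =>
      rw [Finset.Icc_eq_empty (by omega), Finset.prod_empty, div_self (by positivity),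
        Real.one_rpow]
  | succ n hn ih =>
      have hn1 : (0:ℝ) < (n:ℝ) + 1 := by positivity
      have hn2 : (0:ℝ) < (n:ℝ) + 1 + 1 := by positivity
      rw [Finset.prod_Icc_succ_top (by omega)]
      push_cast
      have hB : (0:ℝ) ≤ (((m:ℝ)+1)/((n:ℝ)+1)) ^ d₁ := by positivity
      have ha' : d₁ / ((n:ℝ)+1) ≤ a (n+1) := by
        have := hm (n+1) (by omega)
        push_cast at this ⊢
        linarith
      have step1 : (1 : ℝ) - a (n+1) ≤ Real.exp (-(d₁/((n:ℝ)+1))) := by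
        have := Real.add_one_le_exp (-(d₁/((n:ℝ)+1)))
        linarith
      have hfac_nonneg : (0:ℝ) ≤ 1 - a (n+1) := by linarith [ha1 (n+1)]
      calc (∏ k ∈ Finset.Icc (m+1) n, (1 - a k)) * (1 - a (n+1))
          ≤ (((m:ℝ)+1)/((n:ℝ)+1)) ^ d₁ * Real.exp (-(d₁/((n:ℝ)+1))) :=
            mul_le_mul ih step1 hfac_nonneg hB
        _ = (((m:ℝ)+1)/((n:ℝ)+1)) ^ d₁ * (Real.exp (-(1/((n:ℝ)+1)))) ^ d₁ := by
            rw [← Real.exp_mul]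
            ring_nf
        _ = (((m:ℝ)+1)/((n:ℝ)+1) * Real.exp (-(1/((n:ℝ)+1)))) ^ d₁ := by
            rw [← Real.mul_rpow (by positivity) (Real.exp_nonneg _)]
        _ ≤ (((m:ℝ)+1)/((n:ℝ)+1+1)) ^ d₁ := by
            apply Real.rpow_le_rpow (by positivity) _ hd₁.le
            have hexp : Real.exp (-(1/((n:ℝ)+1))) ≤ ((n:ℝ)+1)/((n:ℝ)+1+1) := by
              rw [← Real.exp_log (show (0:ℝ) < ((n:ℝ)+1)/((n:ℝ)+1+1) by positivity),
                Real.exp_le_exp, neg_le, ← Real.log_inv]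
              apply (Real.log_le_sub_one_of_pos (by positivity)).trans
              rw [inv_div, div_sub_one (by positivity),
                div_le_div_iff₀ (by positivity) (by positivity)]
              nlinarith
            calc ((m:ℝ)+1)/((n:ℝ)+1) * Real.exp (-(1/((n:ℝ)+1)))
                ≤ ((m:ℝ)+1)/((n:ℝ)+1) * (((n:ℝ)+1)/((n:ℝ)+1+1)) :=
                  mul_le_mul_of_nonneg_left hexp (by positivity)
              _ = ((m:ℝ)+1)/((n:ℝ)+1+1) := by field_simp

/-- bound on the maximal weight `a(m) χ(n,m+1)` in terms of
`β_{n₀}(n)`, where `β_{n₀}(n) = n₀^{-(d₂-d₁)} n^{-d₁}` if `d₁ ≤ d₂` and `n^{-d₂}` otherwise. -/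
theorem stmt_3 (a : ℕ → ℝ) (d₁ d₂ d₃ : ℝ)
    (hd₁ : 0 < d₁) (hd₂ : 0 < d₂) (hd₂' : d₂ ≤ 1) (hd₃ : 0 < d₃)
    (n₀ : ℕ) (hn₀ : 1 ≤ n₀)
    (ha0 : ∀ k, 0 ≤ a k) (ha1 : ∀ k, a k ≤ 1)
    (hbound : ∀ k, n₀ ≤ k → d₁ / (k:ℝ) ≤ a k ∧ a k ≤ d₃ / (k:ℝ) ^ d₂) :
    ∀ n m : ℕ, n₀ ≤ m → m ≤ n →
      a m * ∏ k ∈ Finset.Icc (m+1) n, (1 - a k) ≤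
        d₃ * (2:ℝ) ^ d₁ *
          (if d₁ ≤ d₂ then 1 / ((n₀:ℝ) ^ (d₂ - d₁) * (n:ℝ) ^ d₁)
           else 1 / (n:ℝ) ^ d₂) := by
  intro n m hm hmn
  have hm1 : 1 ≤ m := le_trans hn₀ hm
  have hmR : (1:ℝ) ≤ (m:ℝ) := by exact_mod_cast hm1
  have hnR : (1:ℝ) ≤ (n:ℝ) := by exact_mod_cast le_trans hm1 hmn
  have hmnR : (m:ℝ) ≤ (n:ℝ) := by exact_mod_cast hmn
  have hmpos : (0:ℝ) < (m:ℝ) := by linarith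
  have hnpos : (0:ℝ) < (n:ℝ) := by linarith
  have hchi : ∏ k ∈ Finset.Icc (m+1) n, (1 - a k) ≤ (((m:ℝ)+1)/((n:ℝ)+1)) ^ d₁ :=
    chi_bound a d₁ hd₁ ha0 ha1 m
      (fun k hk => (hbound k (by omega)).1) n hmn
  have hchi2 : (((m:ℝ)+1)/((n:ℝ)+1)) ^ d₁ ≤ (2 * (m:ℝ) / (n:ℝ)) ^ d₁ := by
    apply Real.rpow_le_rpow (by positivity) _ hd₁.le
    rw [div_le_div_iff₀ (by positivity) hnpos]
    nlinarith
  have ham : a m ≤ d₃ / (m:ℝ) ^ d₂ := (hbound m hm).2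
  have hchi0 : 0 ≤ ∏ k ∈ Finset.Icc (m+1) n, (1 - a k) :=
    Finset.prod_nonneg fun k _ => by linarith [ha1 k]
  have key : a m * ∏ k ∈ Finset.Icc (m+1) n, (1 - a k) ≤
      d₃ * (2:ℝ) ^ d₁ * ((m:ℝ) ^ (d₁ - d₂) / (n:ℝ) ^ d₁) := by
    calc a m * ∏ k ∈ Finset.Icc (m+1) n, (1 - a k)
        ≤ (d₃ / (m:ℝ) ^ d₂) * (2 * (m:ℝ) / (n:ℝ)) ^ d₁ :=
          mul_le_mul ham (hchi.trans hchi2) hchi0 (by positivity)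
      _ = d₃ * (2:ℝ) ^ d₁ * ((m:ℝ) ^ (d₁ - d₂) / (n:ℝ) ^ d₁) := by
          rw [Real.div_rpow (by positivity) hnpos.le,
            Real.mul_rpow (by norm_num) hmpos.le,
            Real.rpow_sub hmpos]
          field_simp
  refine key.trans ?_
  split_ifs with h
  · have hn₀pos : (0:ℝ) < (n₀:ℝ) := by exact_mod_cast hn₀
    have h1 : (m:ℝ) ^ (d₁ - d₂) ≤ (n₀:ℝ) ^ (d₁ - d₂) :=
      Real.rpow_le_rpow_of_nonpos hn₀pos (by exact_mod_cast hm) (by linarith)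
    have h2 : (n₀:ℝ) ^ (d₁ - d₂) = 1 / (n₀:ℝ) ^ (d₂ - d₁) := by
      rw [one_div, ← Real.rpow_neg hn₀pos.le, neg_sub]
    have h2' : ((n₀:ℝ) ^ (d₂ - d₁))⁻¹ = (n₀:ℝ) ^ (d₁ - d₂) := by
      rw [← Real.rpow_neg hn₀pos.le, neg_sub]
    have h3 : (m:ℝ) ^ (d₁ - d₂) / (n:ℝ) ^ d₁ ≤ 1 / ((n₀:ℝ) ^ (d₂ - d₁) * (n:ℝ) ^ d₁) := by
      rw [one_div, mul_inv, h2', div_eq_mul_inv]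
      exact mul_le_mul_of_nonneg_right h1 (by positivity)
    exact mul_le_mul_of_nonneg_left h3 (by positivity)
  · push_neg at h
    have h1 : (m:ℝ) ^ (d₁ - d₂) ≤ (n:ℝ) ^ (d₁ - d₂) :=
      Real.rpow_le_rpow hmpos.le hmnR (by linarith)
    have h2 : (n:ℝ) ^ (d₁ - d₂) / (n:ℝ) ^ d₁ = 1 / (n:ℝ) ^ d₂ := by
      rw [← Real.rpow_sub hnpos, one_div, ← Real.rpow_neg hnpos.le]
      ring_nf
    have h3 : (m:ℝ) ^ (d₁ - d₂) / (n:ℝ) ^ d₁ ≤ 1 / (n:ℝ) ^ d₂ := by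
      rw [← h2]
      exact div_le_div_of_nonneg_right h1 (by positivity) |>.trans le_rfl
    exact mul_le_mul_of_nonneg_left h3 (by positivity)
end

section
/- Consider Q-learning on a finite state space $S_1$ ($|S_1| = s$) and action space $A$ ($|A| = r$) with discount $\gamma \in (0,1)$, transition kernel $p(j|i,u)$, and cost $k(i,u)$. Define $g^{i,u}(Q) = k(i,u) + \gamma \sum_j p(j|i,u) \min_a Q(j,a)$ and $F^{i,u}(Q, X, Z) = \mathbb{1}\{X=i, Z=u\}(g^{i,u}(Q) - Q(i,u)) + Q(i,u)$. Let $\pi$ be any probability distribution on $S_1 \times A$ with $\pi(i,u) \ge \pi_{\min} > 0$ for all $(i,u)$. Then for all $Q_1, Q_2 \in \mathbb{R}^{s \times r}$: $\left\|\sum_{i,u} \pi(i,u)(F(Q_1,i,u) - F(Q_2,i,u))\right\|_\infty \le (1 - (1-\gamma)\pi_{\min}) \|Q_1 - Q_2\|_\infty$. -/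
lemma inf'_abs_sub_le {A : Type*} [Fintype A] [Nonempty A] (f g : A → ℝ) (M : ℝ)
    (h : ∀ a, |f a - g a| ≤ M) :
    |Finset.univ.inf' Finset.univ_nonempty f - Finset.univ.inf' Finset.univ_nonempty g| ≤ M := by
  rw [abs_le]
  constructor
  · obtain ⟨a, -, ha⟩ := Finset.exists_mem_eq_inf' (Finset.univ_nonempty (α := A)) f
    have h1 : Finset.univ.inf' Finset.univ_nonempty g ≤ g a :=
      Finset.inf'_le _ (Finset.mem_univ a)
    have := abs_le.mp (h a)
    rw [ha]; linarith [this.1, this.2]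
  · obtain ⟨a, -, ha⟩ := Finset.exists_mem_eq_inf' (Finset.univ_nonempty (α := A)) g
    have h1 : Finset.univ.inf' Finset.univ_nonempty f ≤ f a :=
      Finset.inf'_le _ (Finset.mem_univ a)
    have := abs_le.mp (h a)
    rw [ha]; linarith [this.1, this.2]

/-- the averaged asynchronous Q-learning map is a max-norm contraction with
factor `1 - (1-γ)π_min`. -/
theorem stmt_9 {S₁ A : Type*} [Fintype S₁] [Fintype A] [Nonempty S₁] [Nonempty A]
    [DecidableEq S₁] [DecidableEq A]
    (γ : ℝ) (hγ : γ ∈ Set.Ioo (0:ℝ) 1)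
    (p : S₁ → A → S₁ → ℝ) (hp0 : ∀ i u j, 0 ≤ p i u j) (hp1 : ∀ i u, ∑ j, p i u j = 1)
    (k : S₁ → A → ℝ)
    (π : S₁ → A → ℝ) (hπ1 : ∑ i, ∑ u, π i u = 1)
    (πmin : ℝ) (hπmin : 0 < πmin) (hπ0 : ∀ i u, πmin ≤ π i u)
    (g : (S₁ → A → ℝ) → S₁ → A → ℝ)
    (hg : ∀ Q i u, g Q i u =
      k i u + γ * ∑ j, p i u j * (Finset.univ.inf' Finset.univ_nonempty (Q j)))
    (F : (S₁ → A → ℝ) → S₁ → A → S₁ → A → ℝ)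
    (hF : ∀ Q X Z i u,
      F Q X Z i u = (if X = i ∧ Z = u then (1:ℝ) else 0) * (g Q i u - Q i u) + Q i u)
    (Q₁ Q₂ : S₁ → A → ℝ) :
    (Finset.univ.sup' Finset.univ_nonempty fun iu : S₁ × A =>
        |∑ X, ∑ Z, π X Z * (F Q₁ X Z iu.1 iu.2 - F Q₂ X Z iu.1 iu.2)|) ≤
      (1 - (1-γ) * πmin) *
        (Finset.univ.sup' Finset.univ_nonempty fun iu : S₁ × A =>
          |Q₁ iu.1 iu.2 - Q₂ iu.1 iu.2|) := by
  obtain ⟨hγ0, hγ1⟩ := hγ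
  set M := Finset.univ.sup' Finset.univ_nonempty fun iu : S₁ × A =>
      |Q₁ iu.1 iu.2 - Q₂ iu.1 iu.2| with hM
  have hMle : ∀ i u, |Q₁ i u - Q₂ i u| ≤ M := fun i u =>
    Finset.le_sup' (f := fun iu : S₁ × A => |Q₁ iu.1 iu.2 - Q₂ iu.1 iu.2|)
      (Finset.mem_univ (i, u))
  have hM0 : 0 ≤ M := le_trans (abs_nonneg _) (hMle Classical.ofNonempty Classical.ofNonempty)
  -- contraction of g
  have hgcon : ∀ i u, |g Q₁ i u - g Q₂ i u| ≤ γ * M := by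
    intro i u
    rw [hg, hg]
    have : (k i u + γ * ∑ j, p i u j * (Finset.univ.inf' Finset.univ_nonempty (Q₁ j))) -
        (k i u + γ * ∑ j, p i u j * (Finset.univ.inf' Finset.univ_nonempty (Q₂ j))) =
        γ * ∑ j, p i u j * ((Finset.univ.inf' Finset.univ_nonempty (Q₁ j)) -
          (Finset.univ.inf' Finset.univ_nonempty (Q₂ j))) := by
      simp only [Finset.mul_sum, mul_sub, Finset.sum_sub_distrib]
      ring
    rw [this, abs_mul, abs_of_pos hγ0]
    have hsum : |∑ j, p i u j * ((Finset.univ.inf' Finset.univ_nonempty (Q₁ j)) -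
        (Finset.univ.inf' Finset.univ_nonempty (Q₂ j)))| ≤ M := by
      calc |∑ j, p i u j * ((Finset.univ.inf' Finset.univ_nonempty (Q₁ j)) -
          (Finset.univ.inf' Finset.univ_nonempty (Q₂ j)))|
          ≤ ∑ j, |p i u j * ((Finset.univ.inf' Finset.univ_nonempty (Q₁ j)) -
            (Finset.univ.inf' Finset.univ_nonempty (Q₂ j)))| := Finset.abs_sum_le_sum_abs _ _
        _ ≤ ∑ j, p i u j * M := by
            apply Finset.sum_le_sum
            intro j _
            rw [abs_mul, abs_of_nonneg (hp0 i u j)]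
            exact mul_le_mul_of_nonneg_left
              (inf'_abs_sub_le (Q₁ j) (Q₂ j) M (fun a => hMle j a)) (hp0 i u j)
        _ = M := by rw [← Finset.sum_mul, hp1, one_mul]
    exact mul_le_mul_of_nonneg_left hsum (le_of_lt hγ0)
  -- π i u ≤ 1
  have hπle1 : ∀ i u, π i u ≤ 1 := by
    intro i u
    have h1 : π i u ≤ ∑ Z, π i Z :=
      Finset.single_le_sum (f := fun Z => π i Z)
        (fun Z _ => le_trans hπmin.le (hπ0 i Z)) (Finset.mem_univ u)
    have h2 : (∑ Z, π i Z) ≤ ∑ X, ∑ Z, π X Z :=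
      Finset.single_le_sum (f := fun X => ∑ Z, π X Z)
        (fun X _ => Finset.sum_nonneg fun Z _ => le_trans hπmin.le (hπ0 X Z))
        (Finset.mem_univ i)
    linarith [hπ1]
  apply Finset.sup'_le
  rintro ⟨i, u⟩ -
  simp only
  have hval : (∑ X, ∑ Z, π X Z * (F Q₁ X Z i u - F Q₂ X Z i u)) =
      π i u * (g Q₁ i u - g Q₂ i u) + (1 - π i u) * (Q₁ i u - Q₂ i u) := by
    have : ∀ X Z, π X Z * (F Q₁ X Z i u - F Q₂ X Z i u) =
        (if X = i ∧ Z = u then π X Z *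
          ((g Q₁ i u - g Q₂ i u) - (Q₁ i u - Q₂ i u)) else 0) +
        π X Z * (Q₁ i u - Q₂ i u) := by
      intro X Z
      rw [hF, hF]
      by_cases h : X = i ∧ Z = u <;> simp [h] <;> ring
    simp only [this, Finset.sum_add_distrib]
    rw [show (∑ X, ∑ Z, (if X = i ∧ Z = u then π X Z *
        ((g Q₁ i u - g Q₂ i u) - (Q₁ i u - Q₂ i u)) else 0)) =
        π i u * ((g Q₁ i u - g Q₂ i u) - (Q₁ i u - Q₂ i u)) by
      simp [ite_and, Finset.sum_ite_eq']]
    rw [show (∑ X, ∑ Z, π X Z * (Q₁ i u - Q₂ i u)) = (Q₁ i u - Q₂ i u) by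
      simp only [← Finset.sum_mul]
      rw [hπ1, one_mul]]
    ring
  rw [hval]
  have hπpos : (0:ℝ) ≤ π i u := le_trans hπmin.le (hπ0 i u)
  have h1π : (0:ℝ) ≤ 1 - π i u := by linarith [hπle1 i u]
  have h1 : |π i u * (g Q₁ i u - g Q₂ i u) + (1 - π i u) * (Q₁ i u - Q₂ i u)| ≤
      π i u * (γ * M) + (1 - π i u) * M := by
    calc |π i u * (g Q₁ i u - g Q₂ i u) + (1 - π i u) * (Q₁ i u - Q₂ i u)|
        ≤ |π i u * (g Q₁ i u - g Q₂ i u)| + |(1 - π i u) * (Q₁ i u - Q₂ i u)| := abs_add_le _ _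
      _ = π i u * |g Q₁ i u - g Q₂ i u| + (1 - π i u) * |Q₁ i u - Q₂ i u| := by
          rw [abs_mul, abs_mul, abs_of_nonneg hπpos, abs_of_nonneg h1π]
      _ ≤ π i u * (γ * M) + (1 - π i u) * M :=
          add_le_add (mul_le_mul_of_nonneg_left (hgcon i u) hπpos)
            (mul_le_mul_of_nonneg_left (hMle i u) h1π)
  have h2 : π i u * (γ * M) + (1 - π i u) * M ≤ (1 - (1-γ) * πmin) * M := by
    have key : (1-γ) * (πmin * M) ≤ (1-γ) * (π i u * M) :=
      mul_le_mul_of_nonneg_left (mul_le_mul_of_nonneg_right (hπ0 i u) hM0)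
        (by linarith)
    nlinarith [key]
  linarith
end

section
/- Let $P$ be an irreducible $s \times s$ stochastic matrix with stationary distribution $\pi$ having positive entries, $D = \mathrm{diag}(\pi)$, $\gamma \in (0,1)$, and $\Phi \in \mathbb{R}^{s \times M}$ full column rank. For $r \in \mathbb{R}^M$, define $F(r,i) = \varphi(i)k(i) + \gamma \varphi(i)\sum_j p(j|i)\varphi(j)^T r - \varphi(i)\varphi(i)^T r + r$, where $\varphi(i)^T$ is the $i$-th row of $\Phi$. Let $\lambda_M$ be the largest singular value of $\Phi^T\sqrt{D}$ and assume $\lambda_M < \frac{\sqrt{2(1-\gamma)}}{1+\gamma}$. Then there exists $\alpha < 1$, explicitly $\alpha = \sqrt{1 - \min_{r\ne 0}\frac{\|\Phi r\|_D^2}{\|r\|^2}(2(1-\gamma) - \lambda_M^2(1+\gamma)^2)}$, such that for all $r, s' \in \mathbb{R}^M$: $\|\sum_i \pi(i)(F(r,i) - F(s',i))\|_2 \le \alpha \|r - s'\|_2$. -/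
open Finset

/-- Cauchy-Schwarz, sqrt form. -/
lemma cs_sum {ι : Type*} [Fintype ι] (f g : ι → ℝ) :
    ∑ i, f i * g i ≤ Real.sqrt (∑ i, f i ^ 2) * Real.sqrt (∑ i, g i ^ 2) := by
  have h := Finset.sum_mul_sq_le_sq_mul_sq Finset.univ f g
  calc ∑ i, f i * g i ≤ |∑ i, f i * g i| := le_abs_self _
    _ = Real.sqrt ((∑ i, f i * g i) ^ 2) := (Real.sqrt_sq_eq_abs _).symm
    _ ≤ Real.sqrt ((∑ i, f i ^ 2) * ∑ i, g i ^ 2) := Real.sqrt_le_sqrt h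
    _ = _ := Real.sqrt_mul (Finset.sum_nonneg fun i _ => sq_nonneg _) _

/-- weighted Cauchy-Schwarz. -/
lemma cs_w {ι : Type*} [Fintype ι] (w f g : ι → ℝ) (hw : ∀ i, 0 ≤ w i) :
    ∑ i, w i * (f i * g i) ≤
      Real.sqrt (∑ i, w i * f i ^ 2) * Real.sqrt (∑ i, w i * g i ^ 2) := by
  have e1 : ∀ i, w i * (f i * g i)
      = (Real.sqrt (w i) * f i) * (Real.sqrt (w i) * g i) := by
    intro i
    rw [mul_mul_mul_comm, Real.mul_self_sqrt (hw i)]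
  have e2 : ∀ (h : ι → ℝ) (i : ι), w i * h i ^ 2 = (Real.sqrt (w i) * h i) ^ 2 := by
    intro h i
    rw [mul_pow, Real.sq_sqrt (hw i)]
  simp_rw [e1, e2]
  exact cs_sum _ _

/-- `‖P y‖_D ≤ ‖y‖_D` -/
lemma Pcontract {s : ℕ}
    (P : Matrix (Fin s) (Fin s) ℝ) (hP0 : ∀ i j, 0 ≤ P i j) (hP1 : ∀ i, ∑ j, P i j = 1)
    (π : Fin s → ℝ) (hπ0 : ∀ i, 0 < π i)
    (hstat : ∀ j, ∑ i, π i * P i j = π j) (y : Fin s → ℝ) :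
    ∑ i, π i * (P.mulVec y i)^2 ≤ ∑ i, π i * (y i)^2 := by
  have step : ∀ i, (P.mulVec y i)^2 ≤ ∑ j, P i j * (y j)^2 := by
    intro i
    have h := Finset.sum_mul_sq_le_sq_mul_sq Finset.univ
      (fun j => Real.sqrt (P i j)) (fun j => Real.sqrt (P i j) * y j)
    have e1 : ∀ j, Real.sqrt (P i j) * (Real.sqrt (P i j) * y j) = P i j * y j := by
      intro j; rw [← mul_assoc, Real.mul_self_sqrt (hP0 i j)]
    have e2 : ∀ j, Real.sqrt (P i j) ^ 2 = P i j := fun j => Real.sq_sqrt (hP0 i j)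
    have e3 : ∀ j, (Real.sqrt (P i j) * y j)^2 = P i j * (y j)^2 := by
      intro j; rw [mul_pow, e2]
    simp_rw [e1, e2, e3, hP1 i, one_mul] at h
    exact h
  calc ∑ i, π i * (P.mulVec y i)^2
      ≤ ∑ i, π i * ∑ j, P i j * (y j)^2 :=
        Finset.sum_le_sum fun i _ => mul_le_mul_of_nonneg_left (step i) (hπ0 i).le
    _ = ∑ j, (∑ i, π i * P i j) * (y j)^2 := by
        simp_rw [Finset.mul_sum]
        rw [Finset.sum_comm]
        simp_rw [Finset.sum_mul]
        exact Finset.sum_congr rfl fun j _ => Finset.sum_congr rfl fun i _ => by ring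
    _ = ∑ j, π j * (y j)^2 := by simp_rw [hstat]

lemma sum_sq_pos {n : ℕ} {w : Fin n → ℝ} (hw : w ≠ 0) : 0 < ∑ i, (w i)^2 := by
  obtain ⟨i0, hi0⟩ := Function.ne_iff.mp hw
  exact Finset.sum_pos' (fun i _ => sq_nonneg _)
    ⟨i0, Finset.mem_univ _, lt_of_le_of_ne (sq_nonneg _) (Ne.symm (pow_ne_zero 2 hi0))⟩

lemma lam_bound {s M : ℕ} (Ψ : Matrix (Fin M) (Fin s) ℝ) (lamM : ℝ)
    (hlamM : IsGreatest
      {t | ∃ v : Fin s → ℝ, (∑ i, (v i)^2) = 1 ∧ t = Real.sqrt (∑ m, (Ψ.mulVec v m)^2)}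
      lamM)
    (w : Fin s → ℝ) : ∑ m, (Ψ.mulVec w m)^2 ≤ lamM^2 * ∑ i, (w i)^2 := by
  have hlam0 : 0 ≤ lamM := by
    obtain ⟨v, hv, ht⟩ := hlamM.1
    rw [ht]; exact Real.sqrt_nonneg _
  rcases eq_or_ne w 0 with hw | hw
  · subst hw
    simp only [Matrix.mulVec_zero, Pi.zero_apply]
    simp
  · have hn2 : 0 < ∑ i, (w i)^2 := sum_sq_pos hw
    set n : ℝ := Real.sqrt (∑ i, (w i)^2) with hn
    have hnpos : 0 < n := Real.sqrt_pos.mpr hn2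
    have hnsq : n^2 = ∑ i, (w i)^2 := Real.sq_sqrt hn2.le
    have hv1 : (∑ i, ((n⁻¹ • w) i)^2) = 1 := by
      simp only [Pi.smul_apply, smul_eq_mul, mul_pow, ← Finset.mul_sum]
      rw [← hnsq]
      field_simp
    have hmem : Real.sqrt (∑ m, (Ψ.mulVec (n⁻¹ • w) m)^2) ≤ lamM :=
      hlamM.2 ⟨n⁻¹ • w, hv1, rfl⟩
    have hsmul : ∀ m, Ψ.mulVec (n⁻¹ • w) m = n⁻¹ * Ψ.mulVec w m := by
      intro m
      rw [Matrix.mulVec_smul]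
      simp
    have hsum : (∑ m, (Ψ.mulVec (n⁻¹ • w) m)^2) = (n⁻¹)^2 * ∑ m, (Ψ.mulVec w m)^2 := by
      simp_rw [hsmul, mul_pow, ← Finset.mul_sum]
    rw [hsum, Real.sqrt_mul (sq_nonneg _), Real.sqrt_sq (inv_nonneg.mpr hnpos.le)] at hmem
    have h1 : Real.sqrt (∑ m, (Ψ.mulVec w m)^2) ≤ lamM * n := by
      rw [mul_comm]
      exact (inv_mul_le_iff₀ hnpos).mp hmem
    calc ∑ m, (Ψ.mulVec w m)^2
        = (Real.sqrt (∑ m, (Ψ.mulVec w m)^2))^2 :=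
          (Real.sq_sqrt (Finset.sum_nonneg fun m _ => sq_nonneg _)).symm
      _ ≤ (lamM * n)^2 := by
          apply pow_le_pow_left₀ (Real.sqrt_nonneg _) h1
      _ = lamM^2 * ∑ i, (w i)^2 := by rw [mul_pow, hnsq]

lemma inf_pos {s M : ℕ} (hM : 0 < M) (Φ : Matrix (Fin s) (Fin M) ℝ)
    (hΦ : Function.Injective Φ.mulVec) (π : Fin s → ℝ) (hπ0 : ∀ i, 0 < π i) :
    0 < ⨅ r : {r : Fin M → ℝ // r ≠ 0},
      (∑ i, π i * (Φ.mulVec r.1 i)^2) / (∑ m, (r.1 m)^2) := by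
  set f : (Fin M → ℝ) → ℝ := fun r => ∑ i, π i * (Φ.mulVec r i)^2 with hf
  have hmv : ∀ (r : Fin M → ℝ) (i : Fin s), Φ.mulVec r i = ∑ m, Φ i m * r m :=
    fun _ _ => rfl
  have hfc : Continuous f := by
    simp only [hf, hmv]
    apply continuous_finset_sum
    intro i _
    exact continuous_const.mul ((continuous_finset_sum _ fun m _ =>
      continuous_const.mul (continuous_apply m)).pow 2)
  set Sph : Set (Fin M → ℝ) := {r | ∑ m, (r m)^2 = 1} with hSph
  have hS_closed : IsClosed Sph :=
    isClosed_eq (continuous_finset_sum _ fun m _ => (continuous_apply m).pow 2)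
      continuous_const
  have hS_bdd : Bornology.IsBounded Sph := by
    apply (Metric.isBounded_closedBall (x := (0 : Fin M → ℝ)) (r := 1)).subset
    intro r hr
    simp only [Metric.mem_closedBall]
    rw [dist_pi_le_iff zero_le_one]
    intro m
    rw [Real.dist_eq, Pi.zero_apply, sub_zero]
    have h1 : (r m)^2 ≤ 1 := by
      have h2 := Finset.single_le_sum (f := fun m => (r m)^2)
        (fun m _ => sq_nonneg _) (Finset.mem_univ m)
      rw [hr] at h2
      exact h2
    calc |r m| = Real.sqrt ((r m)^2) := (Real.sqrt_sq_eq_abs _).symm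
      _ ≤ Real.sqrt 1 := Real.sqrt_le_sqrt h1
      _ = 1 := Real.sqrt_one
  have hS_cpt : IsCompact Sph := Metric.isCompact_of_isClosed_isBounded hS_closed hS_bdd
  have hS_ne : Sph.Nonempty := by
    refine ⟨Pi.single (⟨0, hM⟩ : Fin M) (1:ℝ), ?_⟩
    have h1 : ∀ m : Fin M, ((Pi.single (⟨0, hM⟩ : Fin M) (1:ℝ) : Fin M → ℝ) m)^2
        = if m = ⟨0, hM⟩ then 1 else 0 := by
      intro m
      rcases eq_or_ne m ⟨0, hM⟩ with h | h <;> simp [Pi.single_apply, h]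
    simp only [hSph, Set.mem_setOf_eq, h1]
    simp
  obtain ⟨r₀, hr₀S, hr₀min⟩ := hS_cpt.exists_isMinOn hS_ne hfc.continuousOn
  have hr₀ne : r₀ ≠ 0 := by
    intro h
    rw [hSph] at hr₀S
    simp only [Set.mem_setOf_eq, h] at hr₀S
    simp at hr₀S
  have hΦr₀ : Φ.mulVec r₀ ≠ 0 := by
    intro h
    exact hr₀ne (hΦ (h.trans (Matrix.mulVec_zero Φ).symm))
  have hfr₀ : 0 < f r₀ := by
    obtain ⟨i0, hi0⟩ := Function.ne_iff.mp hΦr₀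
    exact Finset.sum_pos' (fun i _ => mul_nonneg (hπ0 i).le (sq_nonneg _))
      ⟨i0, Finset.mem_univ _, mul_pos (hπ0 i0)
        (lt_of_le_of_ne (sq_nonneg _) (Ne.symm (pow_ne_zero 2 hi0)))⟩
  have hle : f r₀ ≤ ⨅ r : {r : Fin M → ℝ // r ≠ 0},
      (∑ i, π i * (Φ.mulVec r.1 i)^2) / (∑ m, (r.1 m)^2) := by
    haveI : Nonempty {r : Fin M → ℝ // r ≠ 0} := by
      refine ⟨⟨Pi.single (⟨0, hM⟩ : Fin M) (1:ℝ), ?_⟩⟩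
      intro h
      have h2 := congrFun h ⟨0, hM⟩
      simp [Pi.single_apply] at h2
    apply le_ciInf
    rintro ⟨r, hr⟩
    have hn2 : 0 < ∑ m, (r m)^2 := sum_sq_pos hr
    set n : ℝ := Real.sqrt (∑ m, (r m)^2) with hn
    have hnpos : 0 < n := Real.sqrt_pos.mpr hn2
    have hnsq : n^2 = ∑ m, (r m)^2 := Real.sq_sqrt hn2.le
    have hu : (n⁻¹ • r) ∈ Sph := by
      simp only [hSph, Set.mem_setOf_eq, Pi.smul_apply, smul_eq_mul, mul_pow,
        ← Finset.mul_sum, ← hnsq]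
      field_simp
    have hfu : f (n⁻¹ • r) = (∑ i, π i * (Φ.mulVec r i)^2) / (∑ m, (r m)^2) := by
      have : ∀ i, Φ.mulVec (n⁻¹ • r) i = n⁻¹ * Φ.mulVec r i := by
        intro i; rw [Matrix.mulVec_smul]; simp
      simp only [hf]
      simp_rw [this, mul_pow]
      rw [eq_div_iff hn2.ne', ← hnsq]
      rw [Finset.sum_mul]
      refine Finset.sum_congr rfl fun i _ => ?_
      field_simp
    have h3 : f r₀ ≤ f (n⁻¹ • r) := hr₀min hu
    rw [hfu] at h3
    exact h3
  exact lt_of_lt_of_le hfr₀ hle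
/-- contraction property of the averaged TD(0) map. Under the feature
scaling assumption `λ_M < √(2(1-γ))/(1+γ)`, the map `r ↦ ∑ᵢ π(i) F(r,i)` is an
`α`-contraction in the Euclidean norm with the stated explicit `α < 1`. -/
theorem stmt_13 (s M : ℕ) (hs : 0 < s) (hM : 0 < M)
    (P : Matrix (Fin s) (Fin s) ℝ) (hP0 : ∀ i j, 0 ≤ P i j) (hP1 : ∀ i, ∑ j, P i j = 1)
    (hirr : ∀ i j, ∃ n : ℕ, 0 < (P ^ n) i j)
    (π : Fin s → ℝ) (hπ0 : ∀ i, 0 < π i) (hπ1 : ∑ i, π i = 1)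
    (hstat : ∀ j, ∑ i, π i * P i j = π j)
    (γ : ℝ) (hγ : γ ∈ Set.Ioo (0:ℝ) 1)
    (Φ : Matrix (Fin s) (Fin M) ℝ) (hΦ : Function.Injective Φ.mulVec)
    (k : Fin s → ℝ)
    (F : (Fin M → ℝ) → Fin s → Fin M → ℝ)
    (hF : ∀ r i m, F r i m =
      Φ i m * k i + γ * Φ i m * (∑ j, P i j * (∑ m', Φ j m' * r m'))
        - Φ i m * (∑ m', Φ i m' * r m') + r m)
    (Ψ : Matrix (Fin M) (Fin s) ℝ)
    (hΨ : Ψ = Φ.transpose * Matrix.diagonal (fun i => Real.sqrt (π i)))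
    (lamM : ℝ)
    (hlamM : IsGreatest
      {t | ∃ v : Fin s → ℝ, (∑ i, (v i)^2) = 1 ∧ t = Real.sqrt (∑ m, (Ψ.mulVec v m)^2)}
      lamM)
    (hlam_small : lamM < Real.sqrt (2*(1-γ)) / (1+γ))
    (α : ℝ)
    (hα : α = Real.sqrt (1 -
      (⨅ r : {r : Fin M → ℝ // r ≠ 0},
        (∑ i, π i * (Φ.mulVec r.1 i)^2) / (∑ m, (r.1 m)^2)) *
      (2*(1-γ) - lamM^2 * (1+γ)^2))) :
    α < 1 ∧
    ∀ r s' : Fin M → ℝ,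
      Real.sqrt (∑ m, (∑ i, π i * (F r i m - F s' i m))^2) ≤
        α * Real.sqrt (∑ m, (r m - s' m)^2) := by
  obtain ⟨hγ0, hγ1⟩ := hγ
  have hmv : ∀ {n m : ℕ} (A : Matrix (Fin n) (Fin m) ℝ) (v : Fin m → ℝ) (i : Fin n),
      A.mulVec v i = ∑ j, A i j * v j := fun _ _ _ => rfl
  obtain ⟨μ, hμdef⟩ : ∃ x : ℝ, x = ⨅ r : {r : Fin M → ℝ // r ≠ 0},
      (∑ i, π i * (Φ.mulVec r.1 i)^2) / (∑ m, (r.1 m)^2) := ⟨_, rfl⟩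
  obtain ⟨c, hcdef⟩ : ∃ x : ℝ, x = 2*(1-γ) - lamM^2 * (1+γ)^2 := ⟨_, rfl⟩
  rw [← hμdef, ← hcdef] at hα
  have hlam0 : 0 ≤ lamM := by
    obtain ⟨v, hv, ht⟩ := hlamM.1
    rw [ht]; exact Real.sqrt_nonneg _
  have h1γ : (0:ℝ) < 1 + γ := by linarith
  have hc_pos : 0 < c := by
    have h1 : lamM * (1+γ) < Real.sqrt (2*(1-γ)) := (lt_div_iff₀ h1γ).mp hlam_small
    have h2 : Real.sqrt (2*(1-γ)) * Real.sqrt (2*(1-γ)) = 2*(1-γ) :=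
      Real.mul_self_sqrt (by linarith)
    have h3 : (lamM*(1+γ)) * (lamM*(1+γ)) < 2*(1-γ) := by
      calc (lamM*(1+γ)) * (lamM*(1+γ))
          < Real.sqrt (2*(1-γ)) * Real.sqrt (2*(1-γ)) :=
            mul_self_lt_mul_self (by positivity) h1
        _ = 2*(1-γ) := h2
    rw [hcdef]; nlinarith [h3]
  have hμ_pos : 0 < μ := by rw [hμdef]; exact inf_pos hM Φ hΦ π hπ0
  have hμ_le : ∀ d : Fin M → ℝ,
      μ * (∑ m, (d m)^2) ≤ ∑ i, π i * (Φ.mulVec d i)^2 := by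
    intro d
    rcases eq_or_ne d 0 with hd | hd
    · subst hd
      simp only [Matrix.mulVec_zero, Pi.zero_apply]
      simp
    · have hn2 : 0 < ∑ m, (d m)^2 := sum_sq_pos hd
      have hbdd : BddBelow (Set.range fun r : {r : Fin M → ℝ // r ≠ 0} =>
          (∑ i, π i * (Φ.mulVec r.1 i)^2) / (∑ m, (r.1 m)^2)) := by
        refine ⟨0, ?_⟩
        rintro x ⟨r, rfl⟩
        exact div_nonneg
          (Finset.sum_nonneg fun i _ => mul_nonneg (hπ0 i).le (sq_nonneg _))
          (Finset.sum_nonneg fun m _ => sq_nonneg _)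
      have h1 : μ ≤ (∑ i, π i * (Φ.mulVec d i)^2) / (∑ m, (d m)^2) := by
        rw [hμdef]; exact ciInf_le hbdd ⟨d, hd⟩
      calc μ * (∑ m, (d m)^2)
          ≤ ((∑ i, π i * (Φ.mulVec d i)^2) / (∑ m, (d m)^2)) * (∑ m, (d m)^2) :=
            mul_le_mul_of_nonneg_right h1 hn2.le
        _ = _ := div_mul_cancel₀ _ hn2.ne'
  have main : ∀ d : Fin M → ℝ,
      ∑ m, (d m + ∑ i, π i * Φ i m *
          (γ * P.mulVec (Φ.mulVec d) i - Φ.mulVec d i))^2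
        ≤ (1 - μ*c) * ∑ m, (d m)^2 := by
    intro d
    set y := Φ.mulVec d with hy
    set z : Fin s → ℝ := fun i => γ * P.mulVec y i - y i with hz
    have hzz : ∀ i, γ * P.mulVec y i - y i = z i := fun i => rfl
    simp only [hzz]
    set A := ∑ i, π i * (y i)^2 with hA
    have hA0 : 0 ≤ A :=
      Finset.sum_nonneg fun i _ => mul_nonneg (hπ0 i).le (sq_nonneg _)
    set B := ∑ i, π i * (P.mulVec y i)^2 with hB
    have hBA : B ≤ A := Pcontract P hP0 hP1 π hπ0 hstat y
    have hB0 : 0 ≤ B :=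
      Finset.sum_nonneg fun i _ => mul_nonneg (hπ0 i).le (sq_nonneg _)
    set ip := ∑ i, π i * (P.mulVec y i * y i) with hip
    have hip_le : |ip| ≤ A := by
      have h1 : ip ≤ Real.sqrt B * Real.sqrt A :=
        cs_w π (fun i => P.mulVec y i) y (fun i => (hπ0 i).le)
      have h2 : -ip ≤ Real.sqrt B * Real.sqrt A := by
        have h3 := cs_w π (fun i => -(P.mulVec y i)) y (fun i => (hπ0 i).le)
        simp only [neg_mul, mul_neg, neg_sq, Finset.sum_neg_distrib] at h3
        rw [hip]
        convert h3 using 2 <;> try rfl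
      have h4 : Real.sqrt B * Real.sqrt A ≤ A := by
        calc Real.sqrt B * Real.sqrt A
            ≤ Real.sqrt A * Real.sqrt A :=
              mul_le_mul_of_nonneg_right (Real.sqrt_le_sqrt hBA) (Real.sqrt_nonneg _)
          _ = A := Real.mul_self_sqrt hA0
      rw [abs_le]; constructor <;> linarith
    have hip1 := (abs_le.mp hip_le).1
    have hip2 := (abs_le.mp hip_le).2
    have hzA : ∑ i, π i * (z i)^2 ≤ (1+γ)^2 * A := by
      have hexp : ∑ i, π i * (z i)^2 = γ^2 * B - 2*γ*ip + A := by
        have h1 : ∀ i, π i * (z i)^2 =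
            γ^2 * (π i * (P.mulVec y i)^2)
              - 2*γ*(π i * (P.mulVec y i * y i)) + π i * (y i)^2 := by
          intro i; simp only [hz]; ring
        rw [Finset.sum_congr rfl fun i _ => h1 i]
        rw [Finset.sum_add_distrib, Finset.sum_sub_distrib,
          ← Finset.mul_sum, ← Finset.mul_sum]
      rw [hexp]
      nlinarith [mul_nonneg (sq_nonneg γ) (sub_nonneg.mpr hBA),
        mul_nonneg hγ0.le (by linarith : (0:ℝ) ≤ A + ip)]
    set w : Fin s → ℝ := fun i => Real.sqrt (π i) * z i with hw
    have hgw : ∀ m, (∑ i, π i * Φ i m * z i) = Ψ.mulVec w m := by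
      intro m
      rw [hmv]
      refine Finset.sum_congr rfl fun i _ => ?_
      rw [hΨ, Matrix.mul_diagonal]
      simp only [Matrix.transpose_apply, hw]
      have hss := Real.mul_self_sqrt (hπ0 i).le
      rw [show Φ i m * Real.sqrt (π i) * (Real.sqrt (π i) * z i)
          = (Real.sqrt (π i) * Real.sqrt (π i)) * (Φ i m * z i) from by ring, hss]
      ring
    have hw2 : ∑ i, (w i)^2 = ∑ i, π i * (z i)^2 := by
      refine Finset.sum_congr rfl fun i _ => ?_
      simp only [hw]
      rw [mul_pow, Real.sq_sqrt (hπ0 i).le]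
    have hg2 : ∑ m, (∑ i, π i * Φ i m * z i)^2 ≤ lamM^2 * ((1+γ)^2 * A) := by
      calc ∑ m, (∑ i, π i * Φ i m * z i)^2
          = ∑ m, (Ψ.mulVec w m)^2 := by simp_rw [hgw]
        _ ≤ lamM^2 * ∑ i, (w i)^2 := lam_bound Ψ lamM hlamM w
        _ = lamM^2 * ∑ i, π i * (z i)^2 := by rw [hw2]
        _ ≤ lamM^2 * ((1+γ)^2 * A) := mul_le_mul_of_nonneg_left hzA (sq_nonneg _)
    have hcross : ∑ m, d m * (∑ i, π i * Φ i m * z i) ≤ -((1-γ) * A) := by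
      have h1 : ∑ m, d m * (∑ i, π i * Φ i m * z i) = ∑ i, π i * (z i * y i) := by
        simp_rw [Finset.mul_sum]
        rw [Finset.sum_comm]
        refine Finset.sum_congr rfl fun i _ => ?_
        rw [hy, hmv]
        simp_rw [Finset.mul_sum]
        exact Finset.sum_congr rfl fun m _ => by ring
      rw [h1]
      have h2 : ∑ i, π i * (z i * y i) = γ * ip - A := by
        have h3 : ∀ i, π i * (z i * y i)
            = γ * (π i * (P.mulVec y i * y i)) - π i * (y i)^2 := by
          intro i; simp only [hz]; ring
        rw [Finset.sum_congr rfl fun i _ => h3 i, Finset.sum_sub_distrib,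
          ← Finset.mul_sum]
      rw [h2]
      nlinarith [mul_le_mul_of_nonneg_left hip2 hγ0.le]
    have hAμ : μ * ∑ m, (d m)^2 ≤ A := hμ_le d
    have hexpand : ∑ m, (d m + ∑ i, π i * Φ i m * z i)^2
        = ∑ m, (d m)^2 + 2 * (∑ m, d m * (∑ i, π i * Φ i m * z i))
          + ∑ m, (∑ i, π i * Φ i m * z i)^2 := by
      rw [Finset.mul_sum, ← Finset.sum_add_distrib, ← Finset.sum_add_distrib]
      exact Finset.sum_congr rfl fun m _ => by ring
    have h5 : 2*(1-γ)*A - lamM^2*((1+γ)^2*A) = c*A := by rw [hcdef]; ring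
    rw [hexpand]
    have h6 : c*A ≥ c * (μ * ∑ m, (d m)^2) := mul_le_mul_of_nonneg_left hAμ hc_pos.le
    linarith [hcross, hg2, h5, h6]
  have hsingle : ∑ m, ((Pi.single (⟨0, hM⟩ : Fin M) (1:ℝ) : Fin M → ℝ) m)^2 = 1 := by
    have h1 : ∀ m : Fin M, ((Pi.single (⟨0, hM⟩ : Fin M) (1:ℝ) : Fin M → ℝ) m)^2
        = if m = ⟨0, hM⟩ then 1 else 0 := by
      intro m
      rcases eq_or_ne m ⟨0, hM⟩ with h | h <;> simp [Pi.single_apply, h]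
    simp only [h1]
    simp
  have h1mc : 0 ≤ 1 - μ*c := by
    have h1 := main (Pi.single (⟨0, hM⟩ : Fin M) (1:ℝ))
    rw [hsingle, mul_one] at h1
    have h2 : (0:ℝ) ≤ ∑ m, ((Pi.single (⟨0, hM⟩ : Fin M) (1:ℝ) : Fin M → ℝ) m
        + ∑ i, π i * Φ i m *
          (γ * P.mulVec (Φ.mulVec (Pi.single (⟨0, hM⟩ : Fin M) (1:ℝ))) i
            - Φ.mulVec (Pi.single (⟨0, hM⟩ : Fin M) (1:ℝ)) i))^2 :=
      Finset.sum_nonneg fun m _ => sq_nonneg _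
    linarith
  constructor
  · rw [hα]
    have h2 : 1 - μ*c < 1 := by
      have := mul_pos hμ_pos hc_pos
      linarith
    calc Real.sqrt (1 - μ*c) < Real.sqrt 1 := Real.sqrt_lt_sqrt h1mc h2
      _ = 1 := Real.sqrt_one
  · intro r s'
    obtain ⟨d, hd⟩ : ∃ d : Fin M → ℝ, d = fun m => r m - s' m := ⟨_, rfl⟩
    have hFd : ∀ m, (∑ i, π i * (F r i m - F s' i m))
        = d m + ∑ i, π i * Φ i m *
            (γ * P.mulVec (Φ.mulVec d) i - Φ.mulVec d i) := by
      intro m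
      have hdiff : ∀ i, F r i m - F s' i m
          = Φ i m * (γ * P.mulVec (Φ.mulVec d) i - Φ.mulVec d i) + d m := by
        intro i
        rw [hF r i m, hF s' i m]
        have hyj : ∀ j, (∑ m', Φ j m' * r m') - (∑ m', Φ j m' * s' m')
            = Φ.mulVec d j := by
          intro j
          rw [hmv, ← Finset.sum_sub_distrib]
          exact Finset.sum_congr rfl fun m' _ => by simp only [hd]; ring
        have hPy : (∑ j, P i j * (∑ m', Φ j m' * r m'))
            - (∑ j, P i j * (∑ m', Φ j m' * s' m'))
            = P.mulVec (Φ.mulVec d) i := by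
          rw [hmv (A := P), ← Finset.sum_sub_distrib]
          refine Finset.sum_congr rfl fun j _ => ?_
          rw [← mul_sub, hyj j]
        have hdm : d m = r m - s' m := by rw [hd]
        linear_combination γ * Φ i m * hPy - Φ i m * (hyj i) - hdm
      calc ∑ i, π i * (F r i m - F s' i m)
          = ∑ i, (π i * Φ i m *
              (γ * P.mulVec (Φ.mulVec d) i - Φ.mulVec d i) + π i * d m) := by
            refine Finset.sum_congr rfl fun i _ => ?_
            rw [hdiff i]; ring
        _ = (∑ i, π i * Φ i m *
              (γ * P.mulVec (Φ.mulVec d) i - Φ.mulVec d i)) + (∑ i, π i) * d m := by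
            rw [Finset.sum_add_distrib, Finset.sum_mul]
        _ = _ := by rw [hπ1, one_mul, add_comm]
    have h2 : (∑ m, (r m - s' m)^2) = ∑ m, (d m)^2 := by rw [hd]
    simp_rw [hFd]
    calc Real.sqrt (∑ m, (d m + ∑ i, π i * Φ i m *
            (γ * P.mulVec (Φ.mulVec d) i - Φ.mulVec d i))^2)
        ≤ Real.sqrt ((1 - μ*c) * ∑ m, (d m)^2) := Real.sqrt_le_sqrt (main d)
      _ = Real.sqrt (1 - μ*c) * Real.sqrt (∑ m, (d m)^2) := Real.sqrt_mul h1mc _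
      _ = α * Real.sqrt (∑ m, (r m - s' m)^2) := by rw [hα, h2]
end

section
/- Let $\Gamma \in (0,1)$ and $c > 0$. Then the sequence $\upsilon(n) := c\left(e^{-\Gamma\sum_{m=0}^{n-1}\frac{1}{m+1}} + \sum_{k=0}^{n-1} e^{-\Gamma\sum_{m=k+1}^{n-1}\frac{1}{m+1}}\frac{1}{(k+1)^2}\right)$ satisfies $\upsilon(n) \le \frac{c'}{n^{\Gamma}}$ for some constant $c' > 0$ and all $n \ge 1$. -/
lemma log_le_sum_inv (a b : ℕ) (h : a ≤ b) :
    Real.log ((b:ℝ)+1) - Real.log ((a:ℝ)+1) ≤ ∑ m ∈ Finset.Ico a b, (1:ℝ)/((m:ℝ)+1) := by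
  induction b, h using Nat.le_induction with
  | base => simp
  | succ b hb ih =>
    rw [Finset.sum_Ico_succ_top hb]
    have hlog : Real.log ((b:ℝ)+2) - Real.log ((b:ℝ)+1) ≤ 1/((b:ℝ)+1) := by
      rw [← Real.log_div (by positivity) (by positivity)]
      have h1 := Real.log_le_sub_one_of_pos (x := ((b:ℝ)+2)/((b:ℝ)+1)) (by positivity)
      have h2 : ((b:ℝ)+2)/((b:ℝ)+1) - 1 = 1/((b:ℝ)+1) := by field_simp; norm_num
      linarith
    push_cast
    have he : ((b:ℝ)+1+1) = (b:ℝ)+2 := by ring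
    rw [he]
    linarith

/-- the finite-time mean-square error recursion bound
`υ(n) ≤ c'/n^Γ` for `Γ ∈ (0,1)`. -/
theorem stmt_18 (Γ c : ℝ) (hΓ : Γ ∈ Set.Ioo (0:ℝ) 1) (hc : 0 < c) :
    ∃ c' > 0, ∀ n : ℕ, 1 ≤ n →
      c * (Real.exp (-Γ * ∑ m ∈ Finset.range n, (1:ℝ)/((m:ℝ)+1)) +
            ∑ k ∈ Finset.range n,
              Real.exp (-Γ * ∑ m ∈ Finset.Ico (k+1) n, (1:ℝ)/((m:ℝ)+1)) *
                (1/((k:ℝ)+1)^2))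
        ≤ c' / (n:ℝ) ^ Γ := by
  obtain ⟨hΓ0, hΓ1⟩ := hΓ
  have hsum : Summable (fun k : ℕ => ((k:ℝ)+1)^(Γ-2)) := by
    have h := (Real.summable_nat_rpow (p := Γ-2)).mpr (by linarith)
    have h2 := (summable_nat_add_iff (f := fun n : ℕ => (n:ℝ)^(Γ-2)) 1).mpr h
    refine h2.congr fun k => ?_
    push_cast; ring_nf
  set T := ∑' k : ℕ, ((k:ℝ)+1)^(Γ-2) with hT
  have hT0 : 0 ≤ T := tsum_nonneg fun k => Real.rpow_nonneg (by positivity) _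
  refine ⟨c*(1+2*T), by positivity, fun n hn => ?_⟩
  have hn0 : (0:ℝ) < n := by exact_mod_cast hn
  have hnΓ : (0:ℝ) < (n:ℝ)^Γ := Real.rpow_pos_of_pos hn0 _
  -- first term
  have key1 : Real.exp (-Γ * ∑ m ∈ Finset.range n, (1:ℝ)/((m:ℝ)+1)) ≤ ((n:ℝ))^(-Γ) := by
    have hs := log_le_sum_inv 0 n (Nat.zero_le n)
    rw [Finset.range_eq_Ico]
    simp only [Nat.cast_zero, zero_add, Real.log_one, sub_zero] at hs
    have hlog : Real.log n ≤ ∑ m ∈ Finset.Ico 0 n, (1:ℝ)/((m:ℝ)+1) :=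
      le_trans (Real.log_le_log hn0 (by linarith)) hs
    rw [Real.rpow_def_of_pos hn0]
    apply Real.exp_le_exp.mpr
    nlinarith
  -- per-term bound on the sum
  have key2 : ∀ k ∈ Finset.range n,
      Real.exp (-Γ * ∑ m ∈ Finset.Ico (k+1) n, (1:ℝ)/((m:ℝ)+1)) * (1/((k:ℝ)+1)^2)
        ≤ 2 * ((k:ℝ)+1)^(Γ-2) * ((n:ℝ))^(-Γ) := by
    intro k hk
    have hk1 : k+1 ≤ n := Finset.mem_range.mp hk
    have hs := log_le_sum_inv (k+1) n hk1
    push_cast at hs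
    rw [show ((k:ℝ)+1+1) = (k:ℝ)+2 from by ring] at hs
    have hkpos : (0:ℝ) < (k:ℝ)+1 := by positivity
    have hk2pos : (0:ℝ) < (k:ℝ)+2 := by positivity
    have hlog : Real.log n - Real.log ((k:ℝ)+2) ≤ ∑ m ∈ Finset.Ico (k+1) n, (1:ℝ)/((m:ℝ)+1) := by
      have := Real.log_le_log hn0 (show (n:ℝ) ≤ (n:ℝ)+1 by linarith)
      linarith
    have hexp : Real.exp (-Γ * ∑ m ∈ Finset.Ico (k+1) n, (1:ℝ)/((m:ℝ)+1))
        ≤ ((k:ℝ)+2)^Γ * ((n:ℝ))^(-Γ) := by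
      have : Real.exp (-Γ * ∑ m ∈ Finset.Ico (k+1) n, (1:ℝ)/((m:ℝ)+1))
          ≤ Real.exp (Γ * Real.log ((k:ℝ)+2) + Real.log n * (-Γ)) := by
        apply Real.exp_le_exp.mpr
        nlinarith
      rw [Real.exp_add] at this
      rw [Real.rpow_def_of_pos hk2pos, Real.rpow_def_of_pos hn0, mul_comm (Real.log ((k:ℝ)+2))]
      exact this
    have hpow : ((k:ℝ)+2)^Γ * (1/((k:ℝ)+1)^2) ≤ 2 * ((k:ℝ)+1)^(Γ-2) := by
      have h1 : ((k:ℝ)+2)^Γ ≤ 2 * ((k:ℝ)+1)^Γ := by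
        have ha : ((k:ℝ)+2) ≤ 2*((k:ℝ)+1) := by linarith
        have hb : ((k:ℝ)+2)^Γ ≤ (2*((k:ℝ)+1))^Γ :=
          Real.rpow_le_rpow (by positivity) ha hΓ0.le
        have hc2 : (2:ℝ)^Γ ≤ 2 := by
          calc (2:ℝ)^Γ ≤ (2:ℝ)^(1:ℝ) := Real.rpow_le_rpow_of_exponent_le one_le_two hΓ1.le
            _ = 2 := Real.rpow_one 2
        rw [Real.mul_rpow (by norm_num) hkpos.le] at hb
        nlinarith [Real.rpow_nonneg hkpos.le Γ]
      have h2 : ((k:ℝ)+1)^(Γ-2) = ((k:ℝ)+1)^Γ * (1/((k:ℝ)+1)^2) := by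
        rw [Real.rpow_sub hkpos]
        rw [show ((2:ℝ)) = ((2:ℕ):ℝ) by norm_num, Real.rpow_natCast]
        ring
      rw [h2]
      have : (0:ℝ) ≤ 1/((k:ℝ)+1)^2 := by positivity
      nlinarith
    calc Real.exp (-Γ * ∑ m ∈ Finset.Ico (k+1) n, (1:ℝ)/((m:ℝ)+1)) * (1/((k:ℝ)+1)^2)
        ≤ (((k:ℝ)+2)^Γ * ((n:ℝ))^(-Γ)) * (1/((k:ℝ)+1)^2) := by
          apply mul_le_mul_of_nonneg_right hexp (by positivity)
      _ = (((k:ℝ)+2)^Γ * (1/((k:ℝ)+1)^2)) * ((n:ℝ))^(-Γ) := by ring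
      _ ≤ (2 * ((k:ℝ)+1)^(Γ-2)) * ((n:ℝ))^(-Γ) := by
          apply mul_le_mul_of_nonneg_right hpow (Real.rpow_nonneg hn0.le _)
      _ = 2 * ((k:ℝ)+1)^(Γ-2) * ((n:ℝ))^(-Γ) := by ring
  have keysum : ∑ k ∈ Finset.range n,
      Real.exp (-Γ * ∑ m ∈ Finset.Ico (k+1) n, (1:ℝ)/((m:ℝ)+1)) * (1/((k:ℝ)+1)^2)
        ≤ 2 * T * ((n:ℝ))^(-Γ) := by
    calc ∑ k ∈ Finset.range n,
        Real.exp (-Γ * ∑ m ∈ Finset.Ico (k+1) n, (1:ℝ)/((m:ℝ)+1)) * (1/((k:ℝ)+1)^2)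
        ≤ ∑ k ∈ Finset.range n, 2 * ((k:ℝ)+1)^(Γ-2) * ((n:ℝ))^(-Γ) :=
          Finset.sum_le_sum key2
      _ = (∑ k ∈ Finset.range n, ((k:ℝ)+1)^(Γ-2)) * (2 * ((n:ℝ))^(-Γ)) := by
          rw [Finset.sum_mul]; congr 1; ext k; ring
      _ ≤ T * (2 * ((n:ℝ))^(-Γ)) := by
          apply mul_le_mul_of_nonneg_right _ (by positivity)
          exact Summable.sum_le_tsum _ (fun k _ => Real.rpow_nonneg (by positivity) _) hsum
      _ = 2 * T * ((n:ℝ))^(-Γ) := by ring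
  have hrw : ((n:ℝ))^(-Γ) = 1 / (n:ℝ)^Γ := by
    rw [Real.rpow_neg hn0.le, one_div]
  calc c * (Real.exp (-Γ * ∑ m ∈ Finset.range n, (1:ℝ)/((m:ℝ)+1)) +
            ∑ k ∈ Finset.range n,
              Real.exp (-Γ * ∑ m ∈ Finset.Ico (k+1) n, (1:ℝ)/((m:ℝ)+1)) * (1/((k:ℝ)+1)^2))
      ≤ c * (((n:ℝ))^(-Γ) + 2 * T * ((n:ℝ))^(-Γ)) := by
        apply mul_le_mul_of_nonneg_left _ hc.le
        exact add_le_add key1 keysum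
    _ = c * (1 + 2*T) / (n:ℝ)^Γ := by
        rw [hrw]; ring
end
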